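/- arXiv:1206.1488 — 2 statements merged into one kernel-verified Lean document; each statement's English description precedes it below -/
import Mathlib

section
/- Let 𝒜 ⊂ L(H) be a separable C*-algebra of bounded operators on a complex separable Hilbert space H. Then 𝒜 has a Følner sequence if and only if 𝒜 satisfies the Følner condition. -/
open Filter Topology
open scoped ComplexOrder ENNReal NNReal

noncomputable section

variable {H : Type*} [NormedAddCommGroup H] [InnerProductSpace ℂ H] [CompleteSpace H]

/-- `P` is a finite-rank orthogonal projection on the Hilbert space `H`. -/
def IsFinRankProj (P : H →L[ℂ] H) : Prop :=
  IsIdempotentElem P ∧ IsSelfAdjoint P ∧ FiniteDimensional ℂ (LinearMap.range (P : H →ₗ[ℂ] H))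

/-- The Hilbert–Schmidt norm of an operator, computed with respect to the Hilbert basis `b`
(for Hilbert–Schmidt operators it is independent of the choice of `b`). -/
def hsNorm {ι : Type*} (b : HilbertBasis ι ℂ H) (T : H →L[ℂ] H) : ℝ :=
  Real.sqrt (∑' i, ‖T (b i)‖ ^ 2)

/-- The canonical trace of an operator, computed with respect to the Hilbert basis `b`
(for trace-class operators it is independent of the choice of `b`). -/
def trOp {ι : Type*} (b : HilbertBasis ι ℂ H) (T : H →L[ℂ] H) : ℂ :=
  ∑' i, (inner ℂ (b i) (T (b i)) : ℂ)

section helpers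

variable {ι : Type*} (b : HilbertBasis ι ℂ H)

/-- Parseval -/
lemma my_parseval (x : H) :
    HasSum (fun i => ‖(inner ℂ (b i) x : ℂ)‖ ^ 2) (‖x‖ ^ 2) := by
  have h := lp.hasSum_norm (p := 2) (by norm_num) (b.repr x)
  simp only [ENNReal.toReal_ofNat] at h
  have hx : ‖b.repr x‖ = ‖x‖ := b.repr.norm_map x
  rw [hx] at h
  have h2 : ∀ y : ℝ, y ^ (2:ℝ) = y ^ (2:ℕ) := fun y => by
    rw [← Real.rpow_natCast y 2]; norm_num
  simp only [h2] at h
  convert h using 2 with i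
  rw [HilbertBasis.repr_apply_apply]

lemma my_parseval_nnreal (x : H) :
    (∑' i, ((‖(inner ℂ (b i) x : ℂ)‖₊ : ℝ≥0∞)) ^ 2) = (‖x‖₊ : ℝ≥0∞) ^ 2 := by
  have h := my_parseval b x
  have h' : HasSum (fun i => (‖(inner ℂ (b i) x : ℂ)‖₊ ^ 2 : ℝ≥0)) (‖x‖₊ ^ 2) := by
    rw [← NNReal.hasSum_coe]
    convert h using 1 <;> push_cast <;> rfl
  calc (∑' i, ((‖(inner ℂ (b i) x : ℂ)‖₊ : ℝ≥0∞)) ^ 2)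
      = ∑' i, ((‖(inner ℂ (b i) x : ℂ)‖₊ ^ 2 : ℝ≥0) : ℝ≥0∞) := by push_cast; rfl
    _ = ((‖x‖₊ ^ 2 : ℝ≥0) : ℝ≥0∞) := by rw [← ENNReal.coe_tsum h'.summable, h'.tsum_eq]
    _ = (‖x‖₊ : ℝ≥0∞) ^ 2 := by push_cast; rfl

def eHS (T : H →L[ℂ] H) : ℝ≥0∞ := ∑' i, ((‖T (b i)‖₊ : ℝ≥0∞)) ^ 2

lemma eHS_ne_top_iff (T : H →L[ℂ] H) :
    eHS b T ≠ ⊤ ↔ Summable (fun i => ‖T (b i)‖ ^ 2) := by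
  rw [eHS]
  have : (∑' i, ((‖T (b i)‖₊ : ℝ≥0∞)) ^ 2) = ∑' i, ((‖T (b i)‖₊ ^ 2 : ℝ≥0) : ℝ≥0∞) := by
    push_cast; rfl
  rw [this, ENNReal.tsum_coe_ne_top_iff_summable, ← NNReal.summable_coe]
  constructor <;> intro hs <;> simpa using hs

lemma hsNorm_eq (T : H →L[ℂ] H) : hsNorm b T = Real.sqrt (eHS b T).toReal := by
  by_cases h : Summable (fun i => ‖T (b i)‖ ^ 2)
  · have h' : Summable (fun i => (‖T (b i)‖₊ ^ 2 : ℝ≥0)) := by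
      rw [← NNReal.summable_coe]
      simpa using h
    rw [hsNorm, eHS]
    congr 1
    set S : ℝ≥0 := ∑' i, ‖T (b i)‖₊ ^ 2 with hS
    have h1 : (∑' i, ((‖T (b i)‖₊ : ℝ≥0∞)) ^ 2) = (S : ℝ≥0∞) :=
      calc (∑' i, ((‖T (b i)‖₊ : ℝ≥0∞)) ^ 2) = ∑' i, ((‖T (b i)‖₊ ^ 2 : ℝ≥0) : ℝ≥0∞) := by
            push_cast; rfl
        _ = (S : ℝ≥0∞) := (ENNReal.coe_tsum h').symm
    rw [h1, ENNReal.coe_toReal, hS, NNReal.coe_tsum]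
    exact tsum_congr fun i => by push_cast; ring
  · rw [hsNorm, tsum_eq_zero_of_not_summable h]
    have : eHS b T = ⊤ := by
      by_contra h'
      exact h ((eHS_ne_top_iff b T).mp h')
    rw [this]; simp

end helpers

section more
variable {ι : Type*} (b : HilbertBasis ι ℂ H)
open ContinuousLinearMap in
lemma eHS_adjoint (T : H →L[ℂ] H) : eHS b T = eHS b (adjoint T) := by
  have key : ∀ S : H →L[ℂ] H, eHS b S =
      ∑' j, ∑' i, ((‖(inner ℂ (b j) (S (b i)) : ℂ)‖₊ : ℝ≥0∞)) ^ 2 := by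
    intro S
    rw [eHS]
    rw [ENNReal.tsum_comm]
    exact tsum_congr fun i => (my_parseval_nnreal b (S (b i))).symm
  rw [key T, key (adjoint T), ENNReal.tsum_comm]
  refine tsum_congr fun i => tsum_congr fun j => ?_
  have hn : ‖(inner ℂ (b j) (T (b i)) : ℂ)‖ = ‖(inner ℂ (b i) ((adjoint T) (b j)) : ℂ)‖ := by
    rw [← ContinuousLinearMap.adjoint_inner_left, norm_inner_symm]
  congr 2
  exact NNReal.coe_injective (by simpa using hn)

open ContinuousLinearMap in
lemma eHS_mul_left_le (T S : H →L[ℂ] H) :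
    eHS b (T * S) ≤ (‖T‖₊ : ℝ≥0∞) ^ 2 * eHS b S := by
  rw [eHS, eHS, ← ENNReal.tsum_mul_left]
  refine ENNReal.tsum_le_tsum fun i => ?_
  rw [← mul_pow]
  gcongr
  exact_mod_cast le_opNNNorm T (S (b i))

open ContinuousLinearMap in
lemma eHS_mul_right_le (S T : H →L[ℂ] H) :
    eHS b (S * T) ≤ (‖T‖₊ : ℝ≥0∞) ^ 2 * eHS b S := by
  rw [eHS_adjoint b (S * T)]
  have : adjoint (S * T) = adjoint T * adjoint S := adjoint_comp S T
  rw [this]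
  calc eHS b (adjoint T * adjoint S) ≤ (‖adjoint T‖₊ : ℝ≥0∞) ^ 2 * eHS b (adjoint S) :=
        eHS_mul_left_le b _ _
    _ = (‖T‖₊ : ℝ≥0∞) ^ 2 * eHS b S := by
        have h1 : ‖adjoint T‖₊ = ‖T‖₊ := NNReal.coe_injective (by simp)
        rw [h1, ← eHS_adjoint]

lemma hsNorm_nonneg (T : H →L[ℂ] H) : 0 ≤ hsNorm b T := Real.sqrt_nonneg _

lemma hsNorm_mul_left_le (T S : H →L[ℂ] H) (hS : eHS b S ≠ ⊤) :
    hsNorm b (T * S) ≤ ‖T‖ * hsNorm b S := by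
  rw [hsNorm_eq, hsNorm_eq]
  have h1 : (eHS b (T * S)).toReal ≤ ((‖T‖₊ : ℝ≥0∞) ^ 2 * eHS b S).toReal := by
    refine ENNReal.toReal_mono ?_ (eHS_mul_left_le b T S)
    exact ENNReal.mul_ne_top (by simp) hS
  calc Real.sqrt (eHS b (T * S)).toReal ≤ Real.sqrt ((‖T‖₊ : ℝ≥0∞) ^ 2 * eHS b S).toReal :=
        Real.sqrt_le_sqrt h1
    _ = ‖T‖ * Real.sqrt (eHS b S).toReal := by
        rw [ENNReal.toReal_mul, Real.sqrt_mul (by positivity)]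
        congr 1
        rw [show ((‖T‖₊ : ℝ≥0∞) ^ 2).toReal = ‖T‖ ^ 2 by simp [ENNReal.toReal_pow]]
        exact Real.sqrt_sq (norm_nonneg T)

lemma hsNorm_mul_right_le (S T : H →L[ℂ] H) (hS : eHS b S ≠ ⊤) :
    hsNorm b (S * T) ≤ ‖T‖ * hsNorm b S := by
  rw [hsNorm_eq, hsNorm_eq]
  have h1 : (eHS b (S * T)).toReal ≤ ((‖T‖₊ : ℝ≥0∞) ^ 2 * eHS b S).toReal := by
    refine ENNReal.toReal_mono ?_ (eHS_mul_right_le b S T)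
    exact ENNReal.mul_ne_top (by simp) hS
  calc Real.sqrt (eHS b (S * T)).toReal ≤ Real.sqrt ((‖T‖₊ : ℝ≥0∞) ^ 2 * eHS b S).toReal :=
        Real.sqrt_le_sqrt h1
    _ = ‖T‖ * Real.sqrt (eHS b S).toReal := by
        rw [ENNReal.toReal_mul, Real.sqrt_mul (by positivity)]
        congr 1
        rw [show ((‖T‖₊ : ℝ≥0∞) ^ 2).toReal = ‖T‖ ^ 2 by simp [ENNReal.toReal_pow]]
        exact Real.sqrt_sq (norm_nonneg T)

lemma eHS_mul_left_ne_top (T S : H →L[ℂ] H) (hS : eHS b S ≠ ⊤) : eHS b (T * S) ≠ ⊤ :=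
  ne_top_of_le_ne_top (ENNReal.mul_ne_top (by simp) hS) (eHS_mul_left_le b T S)

lemma eHS_mul_right_ne_top (S T : H →L[ℂ] H) (hS : eHS b S ≠ ⊤) : eHS b (S * T) ≠ ⊤ :=
  ne_top_of_le_ne_top (ENNReal.mul_ne_top (by simp) hS) (eHS_mul_right_le b S T)

end more

section proj
variable {ι : Type*} (b : HilbertBasis ι ℂ H)

lemma proj_fix (Q : H →L[ℂ] H) (hQ : IsIdempotentElem Q) (y : H)
    (hy : y ∈ LinearMap.range (Q : H →ₗ[ℂ] H)) : Q y = y := by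
  obtain ⟨z, rfl⟩ := hy
  have := congrArg (fun S : H →L[ℂ] H => S z) hQ
  simpa using this

lemma norm_proj_apply_sq (Q : H →L[ℂ] H) (hQ : IsFinRankProj Q) (x : H) :
    haveI : FiniteDimensional ℂ (LinearMap.range (Q : H →ₗ[ℂ] H)) := hQ.2.2
    ‖Q x‖ ^ 2 = ∑ k : Fin (Module.finrank ℂ (LinearMap.range (Q : H →ₗ[ℂ] H))),
      ‖(inner ℂ ((stdOrthonormalBasis ℂ (LinearMap.range (Q : H →ₗ[ℂ] H)) k : H)) x : ℂ)‖ ^ 2 := by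
  haveI : FiniteDimensional ℂ (LinearMap.range (Q : H →ₗ[ℂ] H)) := hQ.2.2
  set V := LinearMap.range (Q : H →ₗ[ℂ] H)
  set v := stdOrthonormalBasis ℂ V
  set y : V := ⟨Q x, LinearMap.mem_range_self _ x⟩ with hy
  have h1 : ‖Q x‖ = ‖y‖ := rfl
  have h2 : ‖y‖ ^ 2 = ∑ k, ‖v.repr y k‖ ^ 2 := by
    rw [← v.repr.norm_map y, EuclideanSpace.norm_eq, Real.sq_sqrt (by positivity)]
  have h3 : ∀ k, v.repr y k = inner ℂ ((v k : H)) x := by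
    intro k
    rw [OrthonormalBasis.repr_apply_apply, Submodule.coe_inner]
    show (inner ℂ ((v k : H)) (Q x) : ℂ) = inner ℂ ((v k : H)) x
    have hsa : ContinuousLinearMap.adjoint Q = Q := hQ.2.1
    rw [← ContinuousLinearMap.adjoint_inner_left, hsa,
      proj_fix Q hQ.1 _ (v k).2]
  rw [h1, h2]
  exact Finset.sum_congr rfl fun k _ => by rw [h3]

lemma hasSum_proj (Q : H →L[ℂ] H) (hQ : IsFinRankProj Q) :
    haveI : FiniteDimensional ℂ (LinearMap.range (Q : H →ₗ[ℂ] H)) := hQ.2.2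
    HasSum (fun i => ‖Q (b i)‖ ^ 2)
      ((Module.finrank ℂ (LinearMap.range (Q : H →ₗ[ℂ] H)) : ℝ)) := by
  haveI : FiniteDimensional ℂ (LinearMap.range (Q : H →ₗ[ℂ] H)) := hQ.2.2
  set V := LinearMap.range (Q : H →ₗ[ℂ] H)
  set v := stdOrthonormalBasis ℂ V
  have key : ∀ k : Fin (Module.finrank ℂ V),
      HasSum (fun i => ‖(inner ℂ ((v k : H)) (b i) : ℂ)‖ ^ 2) 1 := by
    intro k
    have h := my_parseval b ((v k : H))
    have hn : ‖(v k : H)‖ = 1 := by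
      have := v.orthonormal.1 k
      exact this
    rw [hn] at h
    simp only [one_pow] at h
    convert h using 2 with i
    rw [norm_inner_symm]
  have h2 := hasSum_sum (f := fun (k : Fin (Module.finrank ℂ V)) (i : ι) =>
    ‖(inner ℂ ((v k : H)) (b i) : ℂ)‖ ^ 2) (a := fun _ => (1:ℝ))
    (s := Finset.univ) (fun k _ => key k)
  simp only [Finset.sum_const, Finset.card_univ, Fintype.card_fin, nsmul_eq_mul, mul_one] at h2
  convert h2 using 2 with i
  exact norm_proj_apply_sq Q hQ (b i)

lemma eHS_proj_ne_top (Q : H →L[ℂ] H) (hQ : IsFinRankProj Q) : eHS b Q ≠ ⊤ :=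
  (eHS_ne_top_iff b Q).mpr (hasSum_proj b Q hQ).summable

lemma hsNorm_proj_pos (Q : H →L[ℂ] H) (hQ : IsFinRankProj Q) (hQ0 : Q ≠ 0) :
    0 < hsNorm b Q := by
  haveI : FiniteDimensional ℂ (LinearMap.range (Q : H →ₗ[ℂ] H)) := hQ.2.2
  have hr : LinearMap.range (Q : H →ₗ[ℂ] H) ≠ ⊥ := by
    intro h
    apply hQ0
    ext x
    have : Q x ∈ LinearMap.range (Q : H →ₗ[ℂ] H) := LinearMap.mem_range_self _ x
    rw [h] at this
    simpa using this
  have hm : 0 < Module.finrank ℂ (LinearMap.range (Q : H →ₗ[ℂ] H)) := by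
    rw [Module.finrank_pos_iff]
    exact Submodule.nontrivial_iff_ne_bot.mpr hr
  rw [hsNorm, (hasSum_proj b Q hQ).tsum_eq]
  exact Real.sqrt_pos.mpr (by exact_mod_cast hm)

end proj

section triangle
variable {ι : Type*} (b : HilbertBasis ι ℂ H)

lemma memℓp_of_summable (T : H →L[ℂ] H) (h : Summable (fun i => ‖T (b i)‖ ^ 2)) :
    Memℓp (fun i => T (b i)) 2 := by
  apply memℓp_gen
  have : ∀ i, ‖T (b i)‖ ^ ((2:ℝ≥0∞).toReal) = ‖T (b i)‖ ^ 2 := by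
    intro i
    rw [ENNReal.toReal_ofNat, ← Real.rpow_natCast (‖T (b i)‖) 2]
    norm_num
  rw [funext this]
  exact h

lemma hsNorm_eq_lp_norm (T : H →L[ℂ] H) (h : Summable (fun i => ‖T (b i)‖ ^ 2)) :
    hsNorm b T = ‖(⟨fun i => T (b i), memℓp_of_summable b T h⟩ : lp (fun _ : ι => H) 2)‖ := by
  rw [lp.norm_eq_tsum_rpow (by norm_num), hsNorm]
  have h2 : ∀ y : ℝ, y ^ ((2:ℝ≥0∞).toReal) = y ^ (2:ℕ) := fun y => by
    rw [ENNReal.toReal_ofNat, ← Real.rpow_natCast y 2]; norm_num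
  simp only [h2]
  rw [Real.sqrt_eq_rpow]
  norm_num

lemma summable_add (S T : H →L[ℂ] H) (hS : Summable (fun i => ‖S (b i)‖ ^ 2))
    (hT : Summable (fun i => ‖T (b i)‖ ^ 2)) :
    Summable (fun i => ‖(S + T) (b i)‖ ^ 2) := by
  have := (memℓp_of_summable b S hS).add (memℓp_of_summable b T hT)
  have h2 : (fun i => S (b i)) + (fun i => T (b i)) = fun i => (S + T) (b i) := by
    funext i; simp
  rw [h2] at this
  have h3 := this.summable (p := 2) (by norm_num)
  have h4 : ∀ y : ℝ, y ^ ((2:ℝ≥0∞).toReal) = y ^ (2:ℕ) := fun y => by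
    rw [ENNReal.toReal_ofNat, ← Real.rpow_natCast y 2]; norm_num
  simpa only [h4] using h3

lemma hsNorm_add_le (S T : H →L[ℂ] H) (hS : Summable (fun i => ‖S (b i)‖ ^ 2))
    (hT : Summable (fun i => ‖T (b i)‖ ^ 2)) :
    hsNorm b (S + T) ≤ hsNorm b S + hsNorm b T := by
  rw [hsNorm_eq_lp_norm b S hS, hsNorm_eq_lp_norm b T hT,
    hsNorm_eq_lp_norm b (S + T) (summable_add b S T hS hT)]
  have : (⟨fun i => (S + T) (b i), memℓp_of_summable b (S + T) (summable_add b S T hS hT)⟩ :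
      lp (fun _ : ι => H) 2) =
      (⟨fun i => S (b i), memℓp_of_summable b S hS⟩ : lp (fun _ : ι => H) 2) +
      (⟨fun i => T (b i), memℓp_of_summable b T hT⟩ : lp (fun _ : ι => H) 2) := by
    apply Subtype.ext
    simp only [lp.coeFn_add]
    funext i
    simp
  rw [this]
  exact norm_add_le _ _

lemma hsNorm_neg (T : H →L[ℂ] H) : hsNorm b (-T) = hsNorm b T := by
  rw [hsNorm, hsNorm]
  congr 1
  exact tsum_congr fun i => by simp

end triangle

section key
variable {ι : Type*} (b : HilbertBasis ι ℂ H)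

lemma key_ineq (Q : H →L[ℂ] H) (hQ : IsFinRankProj Q) (hQ0 : Q ≠ 0) (A B : H →L[ℂ] H) :
    hsNorm b (A * Q - Q * A) / hsNorm b Q ≤
      hsNorm b (B * Q - Q * B) / hsNorm b Q + 2 * ‖A - B‖ := by
  have hQt : eHS b Q ≠ ⊤ := eHS_proj_ne_top b Q hQ
  have hpos : 0 < hsNorm b Q := hsNorm_proj_pos b Q hQ hQ0
  have sTQ : ∀ T : H →L[ℂ] H, Summable fun i => ‖(T * Q) (b i)‖ ^ 2 := fun T =>
    (eHS_ne_top_iff b _).mp (eHS_mul_left_ne_top b T Q hQt)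
  have sQT : ∀ T : H →L[ℂ] H, Summable fun i => ‖(Q * T) (b i)‖ ^ 2 := fun T =>
    (eHS_ne_top_iff b _).mp (eHS_mul_right_ne_top b Q T hQt)
  have sneg : ∀ T : H →L[ℂ] H, Summable (fun i => ‖T (b i)‖ ^ 2) →
      Summable (fun i => ‖(-T) (b i)‖ ^ 2) := by
    intro T h; simpa using h
  have hdec : A * Q - Q * A = (B * Q - Q * B) + ((A - B) * Q + -(Q * (A - B))) := by
    noncomm_ring
  have t1 : hsNorm b (A * Q - Q * A) ≤ hsNorm b (B * Q - Q * B)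
      + (hsNorm b ((A - B) * Q) + hsNorm b (Q * (A - B))) := by
    rw [hdec]
    have s1 : Summable fun i => ‖(B * Q - Q * B) (b i)‖ ^ 2 := by
      have := summable_add b (B * Q) (-(Q * B)) (sTQ B) (sneg _ (sQT B))
      simpa [sub_eq_add_neg] using this
    have s2 : Summable fun i => ‖((A - B) * Q) (b i)‖ ^ 2 := sTQ _
    have s3 : Summable fun i => ‖(-(Q * (A - B))) (b i)‖ ^ 2 := sneg _ (sQT _)
    calc hsNorm b ((B * Q - Q * B) + ((A - B) * Q + -(Q * (A - B))))
        ≤ hsNorm b (B * Q - Q * B) + hsNorm b ((A - B) * Q + -(Q * (A - B))) :=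
          hsNorm_add_le b _ _ s1 (summable_add b _ _ s2 s3)
      _ ≤ hsNorm b (B * Q - Q * B) + (hsNorm b ((A - B) * Q) + hsNorm b (-(Q * (A - B)))) := by
          have := hsNorm_add_le b _ _ s2 s3
          linarith
      _ = _ := by rw [hsNorm_neg]
  have t2 : hsNorm b ((A - B) * Q) ≤ ‖A - B‖ * hsNorm b Q := hsNorm_mul_left_le b _ _ hQt
  have t3 : hsNorm b (Q * (A - B)) ≤ ‖A - B‖ * hsNorm b Q := hsNorm_mul_right_le b _ _ hQt
  have hne : hsNorm b Q ≠ 0 := ne_of_gt hpos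
  rw [div_le_iff₀ hpos, add_mul, div_mul_cancel₀ _ hne]
  nlinarith [t1, t2, t3, hpos]

end key

/-- `{P n}` is a Følner sequence (of non-zero finite-rank orthogonal projections)
for the set of operators `S ⊆ L(H)`. -/
def IsFolnerSeq {ι : Type*} (b : HilbertBasis ι ℂ H) (S : Set (H →L[ℂ] H))
    (P : ℕ → H →L[ℂ] H) : Prop :=
  (∀ n, IsFinRankProj (P n) ∧ P n ≠ 0) ∧
  ∀ A ∈ S, Tendsto (fun n => hsNorm b (A * P n - P n * A) / hsNorm b (P n)) atTop (𝓝 0)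

/-- A proper Følner sequence: an increasing Følner sequence converging strongly to `1`. -/
def IsProperFolnerSeq {ι : Type*} (b : HilbertBasis ι ℂ H) (S : Set (H →L[ℂ] H))
    (P : ℕ → H →L[ℂ] H) : Prop :=
  IsFolnerSeq b S P ∧ Monotone (fun n => LinearMap.range (P n : H →ₗ[ℂ] H)) ∧
    ∀ x : H, Tendsto (fun n => P n x) atTop (𝓝 x)

/-- a separable concrete C*-algebra `𝒜 ⊆ L(H)` has a Følner sequence iff it
satisfies the Følner condition (local finite approximation by finite-rank projections). -/
theorem exists_folnerSeq_iff_folner_condition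
    {H : Type*} [NormedAddCommGroup H] [InnerProductSpace ℂ H] [CompleteSpace H]
    {ι : Type*} [Countable ι] (b : HilbertBasis ι ℂ H)
    (𝒜 : StarSubalgebra ℂ (H →L[ℂ] H)) (hclosed : IsClosed (𝒜 : Set (H →L[ℂ] H)))
    (hsep : TopologicalSpace.IsSeparable (𝒜 : Set (H →L[ℂ] H))) :
    (∃ P : ℕ → H →L[ℂ] H, IsFolnerSeq b (𝒜 : Set (H →L[ℂ] H)) P) ↔
      (∀ F : Finset (H →L[ℂ] H), (F : Set (H →L[ℂ] H)) ⊆ (𝒜 : Set (H →L[ℂ] H)) →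
        ∀ ε > (0 : ℝ), ∃ Q : H →L[ℂ] H, IsFinRankProj Q ∧ Q ≠ 0 ∧
          ∀ A ∈ F, hsNorm b (A * Q - Q * A) / hsNorm b Q < ε) := by
  constructor
  · rintro ⟨P, hP⟩ F hF ε hε
    have hev : ∀ᶠ n in atTop, ∀ A ∈ F,
        hsNorm b (A * P n - P n * A) / hsNorm b (P n) < ε := by
      rw [Filter.eventually_all_finset]
      intro A hA
      exact (hP.2 A (hF hA)).eventually_lt_const hε
    obtain ⟨n, hn⟩ := hev.exists
    exact ⟨P n, (hP.1 n).1, (hP.1 n).2, hn⟩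
  · intro hcond
    classical
    haveI := hsep.separableSpace
    haveI : Nonempty (𝒜 : Set (H →L[ℂ] H)) := ⟨⟨1, 𝒜.one_mem⟩⟩
    obtain ⟨u, hu⟩ := TopologicalSpace.exists_dense_seq (𝒜 : Set (H →L[ℂ] H))
    have choice : ∀ n : ℕ, ∃ Q : H →L[ℂ] H, IsFinRankProj Q ∧ Q ≠ 0 ∧
        ∀ A ∈ (Finset.range (n+1)).image (fun k => ((u k : H →L[ℂ] H))),
          hsNorm b (A * Q - Q * A) / hsNorm b Q < 1 / ((n : ℝ) + 1) := by
      intro n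
      apply hcond
      · intro A hA
        simp only [Finset.coe_image, Set.mem_image] at hA
        obtain ⟨k, _, rfl⟩ := hA
        exact (u k).2
      · positivity
    choose Q hQ1 hQ2 hQ3 using choice
    refine ⟨Q, fun n => ⟨hQ1 n, hQ2 n⟩, ?_⟩
    intro A hA
    rw [Metric.tendsto_atTop]
    intro ε hε
    obtain ⟨k, hk⟩ := hu.exists_dist_lt (⟨A, hA⟩ : (𝒜 : Set (H →L[ℂ] H)))
      (show (0:ℝ) < ε/8 by linarith)
    have hk' : ‖A - (u k : H →L[ℂ] H)‖ < ε / 8 := by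
      have hd : dist (⟨A, hA⟩ : (𝒜 : Set (H →L[ℂ] H))) (u k)
          = ‖A - (u k : H →L[ℂ] H)‖ := by
        rw [Subtype.dist_eq, dist_eq_norm]
      rwa [hd] at hk
    obtain ⟨K, hK⟩ : ∃ K : ℕ, 1/((K:ℝ)+1) < ε/2 := exists_nat_one_div_lt (by linarith)
    refine ⟨max k K, fun n hn => ?_⟩
    have hkn : k ≤ n := le_trans (le_max_left _ _) hn
    have hKn : K ≤ n := le_trans (le_max_right _ _) hn
    have hmem : (u k : H →L[ℂ] H) ∈
        (Finset.range (n+1)).image (fun k => ((u k : H →L[ℂ] H))) := by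
      simp only [Finset.mem_image, Finset.mem_range]
      exact ⟨k, by omega, rfl⟩
    have h1 := hQ3 n _ hmem
    have h2 := key_ineq b (Q n) (hQ1 n) (hQ2 n) A (u k : H →L[ℂ] H)
    have h3 : 1/((n:ℝ)+1) ≤ 1/((K:ℝ)+1) := by
      apply one_div_le_one_div_of_le (by positivity)
      have : (K:ℝ) ≤ (n:ℝ) := by exact_mod_cast hKn
      linarith
    have hnn : 0 ≤ hsNorm b (A * Q n - Q n * A) / hsNorm b (Q n) :=
      div_nonneg (hsNorm_nonneg b _) (hsNorm_nonneg b _)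
    rw [dist_zero_right, Real.norm_eq_abs, abs_of_nonneg hnn]
    calc hsNorm b (A * Q n - Q n * A) / hsNorm b (Q n)
        ≤ hsNorm b ((u k : H →L[ℂ] H) * Q n - Q n * (u k : H →L[ℂ] H)) / hsNorm b (Q n)
          + 2 * ‖A - (u k : H →L[ℂ] H)‖ := h2
      _ < 1 / ((n:ℝ)+1) + 2 * (ε/8) := by
          apply add_lt_add_of_lt_of_le h1
          nlinarith [hk']
      _ ≤ 1/((K:ℝ)+1) + ε/4 := by linarith
      _ < ε := by linarith
end
end

section
/- Let 𝒯 be a set of bounded operators on a complex separable Hilbert space H and let {P_n}_{n∈ℕ} be an increasing sequence of non-zero finite-rank orthogonal projections converging strongly to the identity such that ‖T P_n − P_n T‖ → 0 (operator norm) for every T ∈ 𝒯 (i.e. {P_n} quasidiagonalizes 𝒯). Then {P_n} is a Følner sequence for 𝒯, i.e. ‖T P_n − P_n T‖₂ / ‖P_n‖₂ → 0 for every T ∈ 𝒯. -/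
open Filter Topology
open scoped ComplexOrder

noncomputable section

variable {H : Type*} [NormedAddCommGroup H] [InnerProductSpace ℂ H] [CompleteSpace H]

section Aux
set_option linter.unusedSectionVars false
local notation "⟪" x ", " y "⟫" => @inner ℂ _ _ x y
open scoped ENNReal NNReal
variable {ι : Type*} (b : HilbertBasis ι ℂ H)

def ennHS {ι : Type*} (b : HilbertBasis ι ℂ H) (T : H →L[ℂ] H) : ℝ≥0∞ :=
  ∑' i, (‖T (b i)‖₊ : ℝ≥0∞) ^ 2

lemma enn_sq (v : H) : (‖v‖₊ : ℝ≥0∞) ^ 2 = ENNReal.ofReal (‖v‖ ^ 2) := by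
  rw [← enorm_eq_nnnorm, ← ofReal_norm, ← ENNReal.ofReal_pow (norm_nonneg v)]

lemma enn_sq' (z : ℂ) : (‖z‖₊ : ℝ≥0∞) ^ 2 = ENNReal.ofReal (‖z‖ ^ 2) := by
  rw [← enorm_eq_nnnorm, ← ofReal_norm, ← ENNReal.ofReal_pow (norm_nonneg z)]

lemma nnnorm_inner_symm (x y : H) : ‖(⟪x, y⟫ : ℂ)‖₊ = ‖(⟪y, x⟫ : ℂ)‖₊ := by
  refine NNReal.coe_injective ?_
  rw [coe_nnnorm, coe_nnnorm, ← inner_conj_symm (𝕜 := ℂ) y x, RCLike.norm_conj]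

lemma parseval_real (x : H) : HasSum (fun i => ‖(⟪b i, x⟫ : ℂ)‖ ^ 2) (‖x‖ ^ 2) := by
  have h := (b.hasSum_inner_mul_inner x x).mapL Complex.reCLM
  have h2 : ∀ i, Complex.reCLM ((⟪x, b i⟫ : ℂ) * ⟪b i, x⟫) = ‖(⟪b i, x⟫ : ℂ)‖ ^ 2 := by
    intro i
    rw [← inner_conj_symm (𝕜 := ℂ) x (b i), mul_comm, Complex.mul_conj]
    simp [Complex.sq_norm]
  have h3 : Complex.reCLM (⟪x, x⟫ : ℂ) = ‖x‖ ^ 2 := by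
    simpa using inner_self_eq_norm_sq (𝕜 := ℂ) x
  simp only [Complex.reCLM_apply] at h2 h3
  simpa only [Complex.reCLM_apply, h2, h3] using h

lemma parseval_enn (x : H) :
    ∑' i, (‖(⟪b i, x⟫ : ℂ)‖₊ : ℝ≥0∞) ^ 2 = (‖x‖₊ : ℝ≥0∞) ^ 2 := by
  have h := parseval_real b x
  calc ∑' i, (‖(⟪b i, x⟫ : ℂ)‖₊ : ℝ≥0∞) ^ 2
      = ∑' i, ENNReal.ofReal (‖(⟪b i, x⟫ : ℂ)‖ ^ 2) := tsum_congr fun i => enn_sq' _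
    _ = ENNReal.ofReal (∑' i, ‖(⟪b i, x⟫ : ℂ)‖ ^ 2) :=
        (ENNReal.ofReal_tsum_of_nonneg (fun i => by positivity) h.summable).symm
    _ = (‖x‖₊ : ℝ≥0∞) ^ 2 := by rw [h.tsum_eq, enn_sq]

lemma parseval_enn' (x : H) :
    ∑' i, (‖(⟪x, b i⟫ : ℂ)‖₊ : ℝ≥0∞) ^ 2 = (‖x‖₊ : ℝ≥0∞) ^ 2 := by
  rw [← parseval_enn b x]
  exact tsum_congr fun i => by rw [nnnorm_inner_symm]

lemma ennHS_star (A : H →L[ℂ] H) : ennHS b (star A) = ennHS b A := by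
  have hstar : ∀ i j, (‖(⟪b j, (star A) (b i)⟫ : ℂ)‖₊ : ℝ≥0∞) ^ 2
      = (‖(⟪b i, A (b j)⟫ : ℂ)‖₊ : ℝ≥0∞) ^ 2 := by
    intro i j
    rw [ContinuousLinearMap.star_eq_adjoint, ContinuousLinearMap.adjoint_inner_right,
      nnnorm_inner_symm]
  calc ennHS b (star A) = ∑' i, ∑' j, (‖(⟪b j, (star A) (b i)⟫ : ℂ)‖₊ : ℝ≥0∞) ^ 2 :=
        tsum_congr fun i => (parseval_enn b _).symm
    _ = ∑' i, ∑' j, (‖(⟪b i, A (b j)⟫ : ℂ)‖₊ : ℝ≥0∞) ^ 2 :=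
        tsum_congr fun i => tsum_congr fun j => hstar i j
    _ = ∑' j, ∑' i, (‖(⟪b i, A (b j)⟫ : ℂ)‖₊ : ℝ≥0∞) ^ 2 := ENNReal.tsum_comm
    _ = ennHS b A := tsum_congr fun j => parseval_enn b _

lemma ennHS_mul_le (A Q : H →L[ℂ] H) : ennHS b (A * Q) ≤ (‖A‖₊ : ℝ≥0∞) ^ 2 * ennHS b Q := by
  rw [ennHS, ennHS, ← ENNReal.tsum_mul_left]
  refine ENNReal.tsum_le_tsum fun i => ?_
  have h : ‖(A * Q) (b i)‖₊ ≤ ‖A‖₊ * ‖Q (b i)‖₊ := A.le_opNNNorm (Q (b i))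
  calc (‖(A * Q) (b i)‖₊ : ℝ≥0∞) ^ 2 ≤ ((‖A‖₊ * ‖Q (b i)‖₊ : ℝ≥0) : ℝ≥0∞) ^ 2 := by
        exact_mod_cast pow_le_pow_left₀ zero_le h 2
    _ = (‖A‖₊ : ℝ≥0∞) ^ 2 * (‖Q (b i)‖₊ : ℝ≥0∞) ^ 2 := by push_cast; ring

lemma selfAdjoint_inner_left {Q : H →L[ℂ] H} (h : IsSelfAdjoint Q) (x y : H) :
    (⟪Q x, y⟫ : ℂ) = ⟪x, Q y⟫ := by
  conv_lhs => rw [← ContinuousLinearMap.isSelfAdjoint_iff'.mp h]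
  exact ContinuousLinearMap.adjoint_inner_left Q y x

lemma norm_sq_eq_norm_inner_self (v : H) : ‖v‖ ^ 2 = ‖(⟪v, v⟫ : ℂ)‖ := by
  rw [inner_self_eq_norm_sq_to_K (𝕜 := ℂ), norm_pow, RCLike.norm_ofReal,
    abs_of_nonneg (norm_nonneg v)]

lemma proj_norm_apply_le {Q : H →L[ℂ] H} (h1 : IsIdempotentElem Q) (h2 : IsSelfAdjoint Q)
    (x : H) : ‖Q x‖ ≤ ‖x‖ := by
  rcases eq_or_ne (Q x) 0 with h | h
  · simp [h]
  have hQQ : Q (Q x) = Q x := congrArg (fun (S : H →L[ℂ] H) => S x) h1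
  have key : ‖Q x‖ ^ 2 ≤ ‖x‖ * ‖Q x‖ := by
    calc ‖Q x‖ ^ 2 = ‖(⟪Q x, Q x⟫ : ℂ)‖ := norm_sq_eq_norm_inner_self _
      _ = ‖(⟪x, Q (Q x)⟫ : ℂ)‖ := by rw [selfAdjoint_inner_left h2]
      _ = ‖(⟪x, Q x⟫ : ℂ)‖ := by rw [hQQ]
      _ ≤ ‖x‖ * ‖Q x‖ := norm_inner_le_norm x (Q x)
  have hQx : 0 < ‖Q x‖ := norm_pos_iff.mpr h
  nlinarith [hQx]

lemma proj_opNNNorm_le {Q : H →L[ℂ] H} (h1 : IsIdempotentElem Q) (h2 : IsSelfAdjoint Q) :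
    ‖Q‖₊ ≤ 1 := by
  rw [← NNReal.coe_le_coe]
  exact ContinuousLinearMap.opNorm_le_bound Q zero_le_one
    (fun x => by simpa using proj_norm_apply_le h1 h2 x)

lemma proj_fixes_range {Q : H →L[ℂ] H} (h1 : IsIdempotentElem Q) {y : H}
    (hy : y ∈ LinearMap.range (Q : H →ₗ[ℂ] H)) : Q y = y := by
  obtain ⟨z, rfl⟩ := hy
  exact congrArg (fun (S : H →L[ℂ] H) => S z) h1

lemma onb_norm_sq {E : Type*} [NormedAddCommGroup E] [InnerProductSpace ℂ E] {n : ℕ}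
    (e : OrthonormalBasis (Fin n) ℂ E) (u : E) :
    ‖u‖ ^ 2 = ∑ j, ‖(⟪e j, u⟫ : ℂ)‖ ^ 2 := by
  have hps := e.sum_inner_mul_inner u u
  have hterm : ∀ j, (⟪u, e j⟫ : ℂ) * ⟪e j, u⟫ = ((‖(⟪e j, u⟫ : ℂ)‖ ^ 2 : ℝ) : ℂ) := by
    intro j
    rw [← inner_conj_symm (𝕜 := ℂ) u (e j), mul_comm, Complex.mul_conj]
    rw [Complex.normSq_eq_norm_sq]
  rw [Finset.sum_congr rfl (fun j _ => hterm j), ← Complex.ofReal_sum] at hps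
  have h3 : (⟪u, u⟫ : ℂ).re = ‖u‖ ^ 2 := by simpa using inner_self_eq_norm_sq (𝕜 := ℂ) u
  have h4 := congrArg Complex.re hps
  rw [Complex.ofReal_re, h3] at h4
  exact h4.symm

lemma ennHS_proj_ne_top {Q : H →L[ℂ] H} (h1 : IsIdempotentElem Q) (h2 : IsSelfAdjoint Q)
    (h3 : FiniteDimensional ℂ (LinearMap.range (Q : H →ₗ[ℂ] H))) : ennHS b Q ≠ ⊤ := by
  set K := LinearMap.range (Q : H →ₗ[ℂ] H) with hK
  haveI : FiniteDimensional ℂ K := h3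
  set e : OrthonormalBasis (Fin (Module.finrank ℂ K)) ℂ K := stdOrthonormalBasis ℂ K with he
  have hfin : ∀ i, (‖Q (b i)‖₊ : ℝ≥0∞) ^ 2
      = ∑ j, (‖(⟪((e j : K) : H), Q (b i)⟫ : ℂ)‖₊ : ℝ≥0∞) ^ 2 := by
    intro i
    have hmem : Q (b i) ∈ K := LinearMap.mem_range_self _ _
    have hnorm : ‖Q (b i)‖ = ‖(⟨Q (b i), hmem⟩ : K)‖ := rfl
    have h := onb_norm_sq e (⟨Q (b i), hmem⟩ : K)
    have hinner : ∀ j, (inner ℂ (e j) (⟨Q (b i), hmem⟩ : K) : ℂ)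
        = ⟪((e j : K) : H), Q (b i)⟫ := fun j => rfl
    rw [enn_sq, hnorm, h, ENNReal.ofReal_sum_of_nonneg (fun j _ => by positivity)]
    exact Finset.sum_congr rfl fun j _ => by rw [hinner j, ← enn_sq']
  have key : ennHS b Q = ∑ j : Fin (Module.finrank ℂ K),
      ∑' i, (‖(⟪((e j : K) : H), Q (b i)⟫ : ℂ)‖₊ : ℝ≥0∞) ^ 2 := by
    calc ennHS b Q = ∑' i, ∑ j, (‖(⟪((e j : K) : H), Q (b i)⟫ : ℂ)‖₊ : ℝ≥0∞) ^ 2 :=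
          tsum_congr hfin
      _ = ∑' i, ∑' j, (‖(⟪((e j : K) : H), Q (b i)⟫ : ℂ)‖₊ : ℝ≥0∞) ^ 2 :=
          tsum_congr fun i => (tsum_fintype _).symm
      _ = ∑' (j : Fin (Module.finrank ℂ K)), ∑' i,
            (‖(⟪((e j : K) : H), Q (b i)⟫ : ℂ)‖₊ : ℝ≥0∞) ^ 2 := ENNReal.tsum_comm
      _ = _ := tsum_fintype _
  rw [key]
  refine (ENNReal.sum_lt_top.mpr fun j _ => ?_).ne
  have hj : ∀ i, (⟪((e j : K) : H), Q (b i)⟫ : ℂ) = ⟪((e j : K) : H), b i⟫ := by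
    intro i
    rw [← selfAdjoint_inner_left h2, proj_fixes_range h1 (e j).2]
  rw [tsum_congr fun i => by rw [hj i]]
  rw [parseval_enn' b (((e j : K) : H))]
  exact ENNReal.pow_lt_top ENNReal.coe_lt_top

lemma ennHS_proj_pos {Q : H →L[ℂ] H} (h2 : IsSelfAdjoint Q) (hne : Q ≠ 0) :
    0 < ennHS b Q := by
  have hex : ∃ i, Q (b i) ≠ 0 := by
    by_contra hall
    push_neg at hall
    apply hne
    ext x
    have h0 : ∀ i, (⟪b i, Q x⟫ : ℂ) = 0 := by
      intro i
      rw [← selfAdjoint_inner_left h2, hall i, inner_zero_left]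
    have hps := (parseval_real b (Q x)).tsum_eq
    rw [tsum_congr (fun i => by rw [h0 i]; simp : ∀ i, ‖(⟪b i, Q x⟫ : ℂ)‖ ^ 2 = (0:ℝ))] at hps
    simp only [tsum_zero] at hps
    have : ‖Q x‖ = 0 := by nlinarith [norm_nonneg (Q x)]
    simpa [norm_eq_zero] using this
  obtain ⟨i, hi⟩ := hex
  calc (0 : ℝ≥0∞) < (‖Q (b i)‖₊ : ℝ≥0∞) ^ 2 := by
        have : (0 : ℝ≥0) < ‖Q (b i)‖₊ := by simpa [pos_iff_ne_zero, nnnorm_eq_zero] using hi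
        positivity
    _ ≤ ennHS b Q := ENNReal.le_tsum i

lemma ennHS_toReal_eq {A : H →L[ℂ] H} (h : ennHS b A ≠ ⊤) :
    ∑' i, ‖A (b i)‖ ^ 2 = (ennHS b A).toReal := by
  set f : ι → ℝ≥0 := fun i => ‖A (b i)‖₊ ^ 2 with hf
  have hcast : ennHS b A = ∑' i, ((f i : ℝ≥0) : ℝ≥0∞) := tsum_congr fun i => by push_cast; rfl
  have hsum : Summable f := ENNReal.tsum_coe_ne_top_iff_summable.mp (hcast ▸ h)
  have h2 : (ennHS b A).toReal = ((∑' i, f i : ℝ≥0) : ℝ) := by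
    rw [hcast, ← ENNReal.coe_tsum hsum, ENNReal.coe_toReal]
  rw [h2, NNReal.coe_tsum]
  exact tsum_congr fun i => by push_cast; rfl



open scoped ENNReal NNReal in
/-- The key quantitative bound: for an orthogonal finite-rank projection `Q` and any `T`,
the HS norm of the commutator is at most `√2 ‖[T,Q]‖` times the HS norm of `Q`. -/
theorem folner_key_bound {ι : Type*} (b : HilbertBasis ι ℂ H) (T Q : H →L[ℂ] H)
    (h1 : IsIdempotentElem Q) (h2 : IsSelfAdjoint Q)
    (h3 : FiniteDimensional ℂ (LinearMap.range (Q : H →ₗ[ℂ] H))) (hne : Q ≠ 0) :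
    hsNorm b (T * Q - Q * T) / hsNorm b Q ≤ Real.sqrt 2 * ‖T * Q - Q * T‖ := by
  set C := T * Q - Q * T with hC
  have h1' : IsIdempotentElem (1 - Q) := h1.one_sub
  have h2' : IsSelfAdjoint ((1 : H →L[ℂ] H) - Q) := (IsSelfAdjoint.one (H →L[ℂ] H)).sub h2
  set X := (1 - Q) * C * Q with hX
  set Y := Q * C * (1 - Q) with hY
  have hQ2 : ∀ (S : H →L[ℂ] H), Q * (Q * S) = Q * S := fun S => by
    rw [← mul_assoc, h1.eq]
  have key : C = X + Y := by
    simp only [hX, hY, hC, mul_sub, sub_mul, mul_one, one_mul, mul_assoc, h1.eq, hQ2]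
    abel
  have hzero : ∀ d : H, ((1 : H →L[ℂ] H) - Q) (Q d) = 0 := by
    intro d
    have h := congrArg (fun (S : H →L[ℂ] H) => S d) h1.eq
    simp only [ContinuousLinearMap.mul_apply] at h
    simp [ContinuousLinearMap.sub_apply, h]
  have orth : ∀ x : H, (inner ℂ (X x) (Y x) : ℂ) = 0 := by
    intro x
    simp only [hX, hY, ContinuousLinearMap.mul_apply]
    rw [selfAdjoint_inner_left h2', hzero, inner_zero_right]
  have pyth : ∀ x : H, (‖C x‖₊ : ℝ≥0∞) ^ 2 = (‖X x‖₊ : ℝ≥0∞) ^ 2 + (‖Y x‖₊ : ℝ≥0∞) ^ 2 := by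
    intro x
    have hx : C x = X x + Y x := by rw [key]; simp
    have hreal : ‖C x‖ ^ 2 = ‖X x‖ ^ 2 + ‖Y x‖ ^ 2 := by
      rw [hx]
      simpa [pow_two] using norm_add_sq_eq_norm_sq_add_norm_sq_of_inner_eq_zero _ _ (orth x)
    rw [enn_sq, enn_sq, enn_sq, hreal, ENNReal.ofReal_add (by positivity) (by positivity)]
  have ennC : ennHS b C = ennHS b X + ennHS b Y := by
    rw [ennHS, ennHS, ennHS, ← ENNReal.tsum_add]
    exact tsum_congr fun i => pyth (b i)
  have hnnX : ‖(1 - Q) * C‖₊ ≤ ‖C‖₊ := by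
    calc ‖(1 - Q) * C‖₊ ≤ ‖(1 : H →L[ℂ] H) - Q‖₊ * ‖C‖₊ := nnnorm_mul_le _ _
      _ ≤ 1 * ‖C‖₊ := mul_le_mul_left (proj_opNNNorm_le h1' h2') _
      _ = ‖C‖₊ := one_mul _
  have hXle : ennHS b X ≤ (‖C‖₊ : ℝ≥0∞) ^ 2 * ennHS b Q := by
    have h := ennHS_mul_le b ((1 - Q) * C) Q
    rw [← hX] at h
    exact h.trans (mul_le_mul_left (pow_le_pow_left' (ENNReal.coe_le_coe.mpr hnnX) 2) _)
  have hYstar : star Y = ((1 - Q) * star C) * Q := by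
    simp only [hY, star_mul, h2.star_eq, h2'.star_eq, mul_assoc]
  have hnnY : ‖(1 - Q) * star C‖₊ ≤ ‖C‖₊ := by
    calc ‖(1 - Q) * star C‖₊ ≤ ‖(1 : H →L[ℂ] H) - Q‖₊ * ‖star C‖₊ := nnnorm_mul_le _ _
      _ ≤ 1 * ‖star C‖₊ := mul_le_mul_left (proj_opNNNorm_le h1' h2') _
      _ = ‖star C‖₊ := one_mul _
      _ = ‖C‖₊ := nnnorm_star _
  have hYle : ennHS b Y ≤ (‖C‖₊ : ℝ≥0∞) ^ 2 * ennHS b Q := by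
    rw [← ennHS_star b Y, hYstar]
    exact (ennHS_mul_le b ((1 - Q) * star C) Q).trans
      (mul_le_mul_left (pow_le_pow_left' (ENNReal.coe_le_coe.mpr hnnY) 2) _)
  have total : ennHS b C ≤ 2 * ((‖C‖₊ : ℝ≥0∞) ^ 2 * ennHS b Q) := by
    rw [ennC, two_mul]
    exact add_le_add hXle hYle
  have hQtop : ennHS b Q ≠ ⊤ := ennHS_proj_ne_top b h1 h2 h3
  have hQpos : 0 < ennHS b Q := ennHS_proj_pos b h2 hne
  have hRHStop : 2 * ((‖C‖₊ : ℝ≥0∞) ^ 2 * ennHS b Q) ≠ ⊤ :=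
    ENNReal.mul_ne_top (by norm_num)
      (ENNReal.mul_ne_top (ENNReal.pow_ne_top ENNReal.coe_ne_top) hQtop)
  have hCtop : ennHS b C ≠ ⊤ := ne_top_of_le_ne_top hRHStop total
  set tQ := (ennHS b Q).toReal with htQ
  have tQpos : 0 < tQ := ENNReal.toReal_pos hQpos.ne' hQtop
  have hsQ : hsNorm b Q = Real.sqrt tQ := by
    simp only [hsNorm]
    rw [ennHS_toReal_eq b hQtop]
  have hsQpos : 0 < hsNorm b Q := by rw [hsQ]; exact Real.sqrt_pos.mpr tQpos
  have hreal : ∑' i, ‖C (b i)‖ ^ 2 ≤ 2 * ‖C‖ ^ 2 * tQ := by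
    rw [ennHS_toReal_eq b hCtop]
    calc (ennHS b C).toReal ≤ (2 * ((‖C‖₊ : ℝ≥0∞) ^ 2 * ennHS b Q)).toReal :=
          ENNReal.toReal_mono hRHStop total
      _ = 2 * ‖C‖ ^ 2 * tQ := by
          rw [ENNReal.toReal_mul, ENNReal.toReal_mul, ENNReal.toReal_pow,
            ENNReal.coe_toReal, coe_nnnorm, ENNReal.toReal_ofNat, mul_assoc]
  have hsC : hsNorm b C ≤ Real.sqrt 2 * ‖C‖ * Real.sqrt tQ := by
    simp only [hsNorm]
    calc Real.sqrt (∑' i, ‖C (b i)‖ ^ 2) ≤ Real.sqrt (2 * ‖C‖ ^ 2 * tQ) :=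
          Real.sqrt_le_sqrt hreal
      _ = Real.sqrt 2 * ‖C‖ * Real.sqrt tQ := by
          rw [Real.sqrt_mul (by positivity), Real.sqrt_mul (by norm_num : (0:ℝ) ≤ 2),
            Real.sqrt_sq (norm_nonneg C)]
  rw [div_le_iff₀ hsQpos, hsQ]
  exact hsC

end Aux

/-- a quasidiagonalizing sequence of projections (increasing, strongly
convergent to `1`, asymptotically commuting in operator norm with every `T ∈ 𝒯`) is a
Følner sequence for `𝒯`. -/
theorem isFolnerSeq_of_quasidiagonalizing
    {H : Type*} [NormedAddCommGroup H] [InnerProductSpace ℂ H] [CompleteSpace H]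
    {ι : Type*} [Countable ι] (b : HilbertBasis ι ℂ H)
    (𝒯 : Set (H →L[ℂ] H)) (P : ℕ → H →L[ℂ] H)
    (hP : ∀ n, IsFinRankProj (P n) ∧ P n ≠ 0)
    (hmono : Monotone fun n => LinearMap.range (P n : H →ₗ[ℂ] H))
    (hstrong : ∀ x : H, Tendsto (fun n => P n x) atTop (𝓝 x))
    (hqd : ∀ T ∈ 𝒯, Tendsto (fun n => ‖T * P n - P n * T‖) atTop (𝓝 0)) :
    IsFolnerSeq b 𝒯 P := by
  refine ⟨hP, fun T hT => ?_⟩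
  have hbound : ∀ n, hsNorm b (T * P n - P n * T) / hsNorm b (P n)
      ≤ Real.sqrt 2 * ‖T * P n - P n * T‖ := by
    intro n
    obtain ⟨⟨h1, h2, h3⟩, hne⟩ := hP n
    exact folner_key_bound b T (P n) h1 h2 h3 hne
  refine squeeze_zero (fun n => div_nonneg (Real.sqrt_nonneg _) (Real.sqrt_nonneg _))
    hbound ?_
  have h := (hqd T hT).const_mul (Real.sqrt 2)
  simpa using h
end
end
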